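/- arXiv:1307.5876 — 3 statements merged into one kernel-verified Lean document; each statement's English description precedes it below -/
import Mathlib

section
/- The characteristic function of a selfdecomposable probability measure μ on ℝ never vanishes: for all u ∈ ℝ, φ_μ(u) ≠ 0, where for each 0 < c < 1 there is a measure μ_c with μ = μ_c * T_c μ. -/
open MeasureTheory ProbabilityTheory

def SelfDecomposable (μ : Measure ℝ) : Prop :=
  ∀ c : ℝ, 0 < c → c < 1 → ∃ μc : Measure ℝ, IsProbabilityMeasure μc ∧
    μ = μc.conv (μ.map (fun x => c * x))

/-- The characteristic function (Fourier transform) of a measure on `ℝ`. -/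
noncomputable def charFun (μ : Measure ℝ) (u : ℝ) : ℂ :=
  ∫ x, Complex.exp (u * x * Complex.I) ∂μ

lemma charFun_integrand_integrable (μ : Measure ℝ) [IsFiniteMeasure μ] (u : ℝ) :
    Integrable (fun x : ℝ => Complex.exp (u * x * Complex.I)) μ := by
  apply Integrable.mono' (integrable_const (1 : ℝ))
  · exact (Continuous.cexp (by continuity)).aestronglyMeasurable
  · filter_upwards with x
    rw [Complex.norm_exp]
    simp

lemma charFun_zero (μ : Measure ℝ) [IsProbabilityMeasure μ] : _root_.charFun μ 0 = 1 := by
  simp [_root_.charFun]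

lemma charFun_continuous (μ : Measure ℝ) [IsProbabilityMeasure μ] :
    Continuous (_root_.charFun μ) := by
  apply continuous_of_dominated (bound := fun _ : ℝ => (1 : ℝ))
  · intro u
    exact (Continuous.cexp (by continuity)).aestronglyMeasurable
  · intro u
    filter_upwards with x
    rw [Complex.norm_exp]
    simp
  · exact integrable_const 1
  · filter_upwards with x
    exact Continuous.cexp (by continuity)

lemma charFun_conv (μ ν : Measure ℝ) [IsProbabilityMeasure μ] [IsProbabilityMeasure ν] (u : ℝ) :
    _root_.charFun (μ.conv ν) u = _root_.charFun μ u * _root_.charFun ν u := by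
  rw [_root_.charFun, Measure.conv,
    integral_map (by fun_prop) ((Continuous.cexp (by continuity)).aestronglyMeasurable)]
  have : ∀ p : ℝ × ℝ, Complex.exp (u * ((p.1 + p.2 : ℝ) : ℂ) * Complex.I)
      = Complex.exp (u * p.1 * Complex.I) * Complex.exp (u * p.2 * Complex.I) := by
    intro p
    rw [← Complex.exp_add]
    congr 1
    push_cast
    ring
  simp_rw [this]
  rw [integral_prod_mul (f := fun x : ℝ => Complex.exp (u * x * Complex.I))
    (g := fun y : ℝ => Complex.exp (u * y * Complex.I))]
  rfl

lemma charFun_map_mul (μ : Measure ℝ) [IsProbabilityMeasure μ] (c u : ℝ) :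
    _root_.charFun (μ.map (fun x => c * x)) u = _root_.charFun μ (c * u) := by
  rw [_root_.charFun, integral_map (by fun_prop)
    ((Continuous.cexp (by continuity)).aestronglyMeasurable), _root_.charFun]
  congr 1
  ext x
  push_cast
  ring_nf

lemma charFun_re (μ : Measure ℝ) [IsProbabilityMeasure μ] (u : ℝ) :
    (_root_.charFun μ u).re = ∫ x, Real.cos (u * x) ∂μ := by
  have h := integral_re (𝕜 := ℂ) (_root_.charFun_integrand_integrable μ u)
  simp only [RCLike.re_to_complex] at h
  rw [_root_.charFun, ← h]
  congr 1
  ext x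
  rw [show (u : ℂ) * x * Complex.I = ((u * x : ℝ) : ℂ) * Complex.I by push_cast; ring]
  exact Complex.exp_ofReal_mul_I_re _

lemma cos_integrable (μ : Measure ℝ) [IsProbabilityMeasure μ] (u : ℝ) :
    Integrable (fun x : ℝ => Real.cos (u * x)) μ := by
  apply Integrable.mono' (integrable_const (1 : ℝ))
  · exact (Real.continuous_cos.comp (by continuity)).aestronglyMeasurable
  · filter_upwards with x
    rw [Real.norm_eq_abs]
    exact Real.abs_cos_le_one _

/-- Doubling inequality for characteristic functions. -/
lemma charFun_doubling (ν : Measure ℝ) [IsProbabilityMeasure ν] (u : ℝ) :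
    1 - (_root_.charFun ν (2 * u)).re ≤ 4 * (1 - (_root_.charFun ν u).re) := by
  rw [_root_.charFun_re, _root_.charFun_re]
  have h1 : ∫ (_ : ℝ), (1 : ℝ) ∂ν = 1 := by simp
  have h2 : 1 - ∫ x, Real.cos (2 * u * x) ∂ν = ∫ x, 1 - Real.cos (2 * u * x) ∂ν := by
    rw [integral_sub (integrable_const 1) (cos_integrable ν (2 * u)), h1]
  have h3 : 4 * (1 - ∫ x, Real.cos (u * x) ∂ν) = ∫ x, 4 * (1 - Real.cos (u * x)) ∂ν := by
    rw [integral_const_mul, integral_sub (integrable_const 1) (cos_integrable ν u), h1]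
  rw [h2, h3]
  apply integral_mono ((integrable_const 1).sub (cos_integrable ν (2 * u)))
    (((integrable_const 1).sub (cos_integrable ν u)).const_mul 4)
  intro x
  have hc : Real.cos (2 * u * x) = 2 * Real.cos (u * x) ^ 2 - 1 := by
    rw [show 2 * u * x = 2 * (u * x) by ring, Real.cos_two_mul]
  have hb1 : Real.cos (u * x) ≤ 1 := Real.cos_le_one _
  have hb2 : -1 ≤ Real.cos (u * x) := Real.neg_one_le_cos _
  simp only [Pi.sub_apply]
  nlinarith

lemma charFun_conj (μ : Measure ℝ) [IsProbabilityMeasure μ] (u : ℝ) :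
    _root_.charFun μ (-u) = starRingEnd ℂ (_root_.charFun μ u) := by
  rw [_root_.charFun, _root_.charFun, ← integral_conj]
  congr 1
  ext x
  rw [← Complex.exp_conj]
  congr 1
  simp [Complex.conj_I]

theorem charFun_ne_zero_of_selfDecomposable (μ : Measure ℝ) [IsProbabilityMeasure μ]
    (hμ : SelfDecomposable μ) : ∀ u : ℝ, _root_.charFun μ u ≠ 0 := by
  by_contra h
  push_neg at h
  obtain ⟨u₀, hu₀⟩ := h
  -- the set of nonnegative zeros is nonempty
  set S : Set ℝ := {u | 0 ≤ u ∧ _root_.charFun μ u = 0} with hS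
  have hSne : S.Nonempty := by
    rcases le_or_gt 0 u₀ with h0 | h0
    · exact ⟨u₀, h0, hu₀⟩
    · refine ⟨-u₀, by linarith, ?_⟩
      rw [_root_.charFun_conj, hu₀, map_zero]
  have hSbdd : BddBelow S := ⟨0, fun x hx => hx.1⟩
  have hSclosed : IsClosed S :=
    (isClosed_le continuous_const continuous_id).inter
      (isClosed_eq (_root_.charFun_continuous μ) continuous_const)
  set t₀ := sInf S with ht₀
  have ht₀S : t₀ ∈ S := hSclosed.csInf_mem hSne hSbdd
  have ht₀pos : 0 < t₀ := by
    rcases lt_or_eq_of_le ht₀S.1 with h | h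
    · exact h
    · exfalso
      have := ht₀S.2
      rw [← h, _root_.charFun_zero] at this
      exact one_ne_zero this
  -- below t₀, charFun doesn't vanish
  have hlt : ∀ v : ℝ, 0 ≤ v → v < t₀ → _root_.charFun μ v ≠ 0 := by
    intro v hv0 hvt hvz
    exact absurd (csInf_le hSbdd ⟨hv0, hvz⟩) (not_le.mpr hvt)
  -- key estimate for each c ∈ (0,1)
  have key : ∀ c : ℝ, 0 < c → c < 1 →
      (_root_.charFun μ (t₀ / 2) / _root_.charFun μ (c * (t₀ / 2))).re ≤ 3 / 4 := by
    intro c hc0 hc1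
    obtain ⟨μc, hμcprob, heq⟩ := hμ c hc0 hc1
    haveI := hμcprob
    have hfact : ∀ u : ℝ, _root_.charFun μ u = _root_.charFun μc u * _root_.charFun μ (c * u) := by
      intro u
      conv_lhs => rw [heq]
      haveI : IsProbabilityMeasure (μ.map (fun x => c * x)) :=
        Measure.isProbabilityMeasure_map (by fun_prop)
      rw [_root_.charFun_conv, _root_.charFun_map_mul]
    -- charFun μc t₀ = 0
    have hμct₀ : _root_.charFun μc t₀ = 0 := by
      have h1 := hfact t₀
      rw [ht₀S.2] at h1
      have h2 : _root_.charFun μ (c * t₀) ≠ 0 :=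
        hlt _ (by positivity) (by nlinarith)
      exact (mul_eq_zero.mp h1.symm).resolve_right h2
    -- doubling
    have hdb := _root_.charFun_doubling μc (t₀ / 2)
    rw [show 2 * (t₀ / 2) = t₀ by ring, hμct₀] at hdb
    simp only [Complex.zero_re, sub_zero] at hdb
    -- identify charFun μc (t₀/2) as the quotient
    have hq : _root_.charFun μc (t₀ / 2) = _root_.charFun μ (t₀ / 2) / _root_.charFun μ (c * (t₀ / 2)) := by
      have h1 := hfact (t₀ / 2)
      have h2 : _root_.charFun μ (c * (t₀ / 2)) ≠ 0 :=
        hlt _ (by positivity) (by nlinarith)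
      rw [h1, mul_div_assoc, div_self h2, mul_one]
    rw [← hq]
    linarith
  -- continuity: as c → 1⁻ the quotient tends to 1
  have hden : _root_.charFun μ (t₀ / 2) ≠ 0 := hlt _ (by positivity) (by linarith)
  have hcont : ContinuousAt (fun c : ℝ =>
      (_root_.charFun μ (t₀ / 2) / _root_.charFun μ (c * (t₀ / 2))).re) 1 := by
    apply Complex.continuous_re.continuousAt.comp
    apply ContinuousAt.div continuousAt_const
    · exact ((_root_.charFun_continuous μ).comp (continuous_mul_right _)).continuousAt
    · simpa using hden
  have hval : (_root_.charFun μ (t₀ / 2) / _root_.charFun μ ((1 : ℝ) * (t₀ / 2))).re = 1 := by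
    rw [one_mul, div_self hden]
    simp
  have hev : ∀ᶠ c in nhdsWithin (1 : ℝ) (Set.Ioo 0 1),
      (3 : ℝ) / 4 < (_root_.charFun μ (t₀ / 2) / _root_.charFun μ (c * (t₀ / 2))).re := by
    apply Filter.Eventually.filter_mono nhdsWithin_le_nhds
    have h34 : (3 : ℝ) / 4 < (fun c : ℝ =>
        (_root_.charFun μ (t₀ / 2) / _root_.charFun μ (c * (t₀ / 2))).re) 1 := by
      show (3 : ℝ) / 4 < (_root_.charFun μ (t₀ / 2) / _root_.charFun μ ((1 : ℝ) * (t₀ / 2))).re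
      rw [hval]; norm_num
    have := continuousAt_const.eventually_lt hcont h34
    filter_upwards [this] with c hc using hc
  haveI : Filter.NeBot (nhdsWithin (1 : ℝ) (Set.Ioo 0 1)) := by
    apply mem_closure_iff_nhdsWithin_neBot.mp
    rw [closure_Ioo (by norm_num : (0:ℝ) ≠ 1)]
    exact ⟨by norm_num, le_refl 1⟩
  obtain ⟨c, hc, hcmem⟩ := (hev.and (eventually_mem_nhdsWithin)).exists
  exact absurd (key c hcmem.1 hcmem.2) (not_le.mpr hc)
end

section
/- Every selfdecomposable real random variable is a perpetuity: if X is selfdecomposable, then there exists a random vector (A, B) with 0 ≤ A ≤ 1 almost surely, A nondegenerate (not a.s. constant equal to 0 or 1), and an independent copy X' of X independent of (A, B), such that X =_d A X' + B. -/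
open MeasureTheory ProbabilityTheory

def SelfDecRV {Ω : Type*} [MeasurableSpace Ω] (P : Measure Ω) (X : Ω → ℝ) : Prop :=
  ∀ t : ℝ, 0 < t → ∃ Xt : Ω → ℝ, IndepFun Xt X P ∧
    P.map X = P.map (fun ω => Xt ω + Real.exp (-t) * X ω)

lemma indepFun_fst_snd' {α β : Type*} [MeasurableSpace α] [MeasurableSpace β]
    (μ : Measure α) (ν : Measure β) [IsProbabilityMeasure μ] [IsProbabilityMeasure ν] :
    IndepFun (Prod.fst : α × β → α) (Prod.snd : α × β → β) (μ.prod ν) := by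
  rw [indepFun_iff_map_prod_eq_prod_map_map measurable_fst.aemeasurable
    measurable_snd.aemeasurable]
  have : (fun ω : α × β => (ω.1, ω.2)) = id := rfl
  simp [this, Measure.map_id, Measure.map_fst_prod, Measure.map_snd_prod]

/-- Every selfdecomposable law is a perpetuity: `X =_d A X' + B` with `0 ≤ A ≤ 1`
a.s., `A` nondegenerate, and `X'` an independent copy of `X` independent of `(A,B)`. -/
theorem selfDec_is_perpetuity {Ω : Type*} [MeasurableSpace Ω] (P : Measure Ω)
    [IsProbabilityMeasure P] (X : Ω → ℝ) (hX : Measurable X) (hsd : SelfDecRV P X) :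
    ∃ (Ω' : Type) (_ : MeasurableSpace Ω') (Q : Measure Ω') (_ : IsProbabilityMeasure Q)
      (A B X' : Ω' → ℝ),
      Measurable A ∧ Measurable B ∧ Measurable X' ∧
      (∀ᵐ ω ∂Q, 0 ≤ A ω ∧ A ω ≤ 1) ∧
      ¬ (∀ᵐ ω ∂Q, A ω = 0) ∧ ¬ (∀ᵐ ω ∂Q, A ω = 1) ∧
      Q.map X' = P.map X ∧
      IndepFun (fun ω => (A ω, B ω)) X' Q ∧
      P.map X = Q.map (fun ω => A ω * X' ω + B ω) := by
  obtain ⟨Xt, hindep, hmap⟩ := hsd 1 one_pos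
  -- the sum is a.e. measurable, since its law is a probability measure
  have hsum : AEMeasurable (fun ω => Xt ω + Real.exp (-1) * X ω) P := by
    by_contra h
    rw [Measure.map_of_not_aemeasurable h] at hmap
    have h1 : (P.map X) Set.univ = 1 := by
      rw [Measure.map_apply hX MeasurableSet.univ]; simp
    rw [hmap] at h1; simp at h1
  have hXtae : AEMeasurable Xt P := by
    have := hsum.sub ((aemeasurable_const (b := Real.exp (-1))).mul hX.aemeasurable)
    convert this using 1; funext ω; simp
  set B0 : Ω → ℝ := hXtae.mk Xt with hB0def
  have hB0meas : Measurable B0 := hXtae.measurable_mk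
  have hB0eq : Xt =ᵐ[P] B0 := hXtae.ae_eq_mk
  have hindepB : IndepFun B0 X P := hindep.congr hB0eq (Filter.EventuallyEq.refl _ _)
  -- the target probability space
  refine ⟨ℝ × ℝ, inferInstance, (P.map B0).prod (P.map X), ?_,
    (fun _ => Real.exp (-1)), Prod.fst, Prod.snd, measurable_const, measurable_fst,
    measurable_snd, ?_, ?_, ?_, ?_, ?_, ?_⟩
  · haveI : IsProbabilityMeasure (P.map B0) := Measure.isProbabilityMeasure_map hB0meas.aemeasurable
    haveI : IsProbabilityMeasure (P.map X) := Measure.isProbabilityMeasure_map hX.aemeasurable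
    infer_instance
  · exact Filter.Eventually.of_forall fun ω =>
      ⟨(Real.exp_pos _).le, Real.exp_le_one_iff.mpr (by norm_num)⟩
  · intro h
    haveI : IsProbabilityMeasure (P.map B0) := Measure.isProbabilityMeasure_map hB0meas.aemeasurable
    haveI : IsProbabilityMeasure (P.map X) := Measure.isProbabilityMeasure_map hX.aemeasurable
    obtain ⟨ω, hω⟩ := h.exists
    exact Real.exp_ne_zero _ hω
  · intro h
    haveI : IsProbabilityMeasure (P.map B0) := Measure.isProbabilityMeasure_map hB0meas.aemeasurable
    haveI : IsProbabilityMeasure (P.map X) := Measure.isProbabilityMeasure_map hX.aemeasurable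
    obtain ⟨ω, hω⟩ := h.exists
    have : Real.exp (-1) < 1 := Real.exp_lt_one_iff.mpr (by norm_num)
    linarith [hω]
  · haveI : IsProbabilityMeasure (P.map B0) := Measure.isProbabilityMeasure_map hB0meas.aemeasurable
    simp [Measure.map_snd_prod]
  · haveI : IsProbabilityMeasure (P.map B0) := Measure.isProbabilityMeasure_map hB0meas.aemeasurable
    haveI : IsProbabilityMeasure (P.map X) := Measure.isProbabilityMeasure_map hX.aemeasurable
    have h := indepFun_fst_snd' (P.map B0) (P.map X)
    exact h.comp (measurable_const.prodMk measurable_id) measurable_id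
  · -- distributional identity
    have hjoint : P.map (fun ω => (B0 ω, X ω)) = (P.map B0).prod (P.map X) :=
      (indepFun_iff_map_prod_eq_prod_map_map hB0meas.aemeasurable hX.aemeasurable).mp hindepB
    have hmm : ((P.map (fun ω => (B0 ω, X ω))).map
        (fun p : ℝ × ℝ => Real.exp (-1) * p.2 + p.1))
        = P.map (fun ω => Real.exp (-1) * X ω + B0 ω) := by
      rw [Measure.map_map (by fun_prop) (hB0meas.prodMk hX)]
      rfl
    rw [← hjoint, hmm]
    rw [hmap]
    refine Measure.map_congr ?_
    filter_upwards [hB0eq] with ω hω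
    rw [← hω]; ring
end

section
/- Let U be uniform on [0,1] and γ_{α+1,λ} a gamma random variable with shape α+1 and rate λ, independent of U. Then U^{1/α} · γ_{α+1,λ} has the gamma distribution with shape α and rate λ. -/
open MeasureTheory ProbabilityTheory Real Set
open scoped ENNReal

section Aux
variable {F : Type*}

lemma my_lintegral_image {s : Set ℝ} {f f' : ℝ → ℝ}
    (hs : MeasurableSet s) (hf' : ∀ x ∈ s, HasDerivWithinAt f (f' x) s x)
    (hf : InjOn f s) (g : ℝ → ℝ≥0∞) :
    ∫⁻ x in f '' s, g x = ∫⁻ x in s, ENNReal.ofReal |f' x| * g (f x) := by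
  simpa only [ContinuousLinearMap.det_toSpanSingleton] using
    lintegral_image_eq_lintegral_abs_det_fderiv_mul volume hs
      (fun x hx => (hf' x hx).hasFDerivWithinAt) hf g

end Aux


lemma my_exp_tail {lam : ℝ} (hlam : 0 < lam) (x : ℝ) :
    ∫⁻ g in Ioi x, ENNReal.ofReal (exp (-(lam * g))) =
      ENNReal.ofReal (exp (-(lam * x)) / lam) := by
  have hint : IntegrableOn (fun g : ℝ => exp (-(lam * g))) (Ioi x) := by
    simpa [neg_mul, mul_comm] using exp_neg_integrableOn_Ioi x hlam
  rw [← ofReal_integral_eq_lintegral_ofReal hint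
    (Filter.Eventually.of_forall fun g => (exp_pos _).le)]
  congr 1
  have hderiv : ∀ g ∈ Ioi x, HasDerivAt (fun g : ℝ => -exp (-(lam * g)) / lam)
      (exp (-(lam * g))) g := by
    intro g _
    have h1 : HasDerivAt (fun g : ℝ => -(lam * g)) (-lam) g := by
      simpa using ((hasDerivAt_id g).const_mul (-lam))
    have h2 := (h1.exp).neg.div_const lam
    convert h2 using 1
    · rfl
    · rfl
    · rfl
    · field_simp
  have htend : Filter.Tendsto (fun g : ℝ => -exp (-(lam * g)) / lam) Filter.atTop (nhds 0) := by
    have h3 : Filter.Tendsto (fun g : ℝ => -(lam * g)) Filter.atTop Filter.atBot := by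
      exact Filter.tendsto_neg_atBot_iff.mpr (Filter.Tendsto.const_mul_atTop hlam Filter.tendsto_id)
    have h4 : Filter.Tendsto (fun g : ℝ => exp (-(lam * g))) Filter.atTop (nhds 0) :=
      Real.tendsto_exp_atBot.comp h3
    have := (h4.neg.div_const lam)
    simpa using this
  have := integral_Ioi_of_hasDerivAt_of_tendsto
    (f := fun g : ℝ => -exp (-(lam * g)) / lam) ((Continuous.continuousWithinAt (by continuity))) hderiv hint htend
  rw [this]
  field_simp
  ring


lemma my_image_Ioc {α g : ℝ} (hα : 0 < α) (hg : 0 < g) :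
    (fun x : ℝ => (x / g) ^ α) '' Ioc 0 g = Ioc 0 1 := by
  ext u
  constructor
  · rintro ⟨x, ⟨hx0, hxg⟩, rfl⟩
    have h1 : 0 < x / g := div_pos hx0 hg
    have h2 : x / g ≤ 1 := (div_le_one hg).2 hxg
    exact ⟨rpow_pos_of_pos h1 _, rpow_le_one h1.le h2 hα.le⟩
  · rintro ⟨hu0, hu1⟩
    refine ⟨u ^ (α⁻¹ : ℝ) * g, ⟨by positivity, ?_⟩, ?_⟩
    · nlinarith [rpow_le_one hu0.le hu1 (inv_pos.2 hα).le, rpow_pos_of_pos hu0 (α⁻¹ : ℝ)]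
    · show (u ^ (α⁻¹ : ℝ) * g / g) ^ α = u
      rw [mul_div_assoc, div_self hg.ne', mul_one, ← rpow_mul hu0.le,
        inv_mul_cancel₀ hα.ne', rpow_one]

lemma my_deriv {α g : ℝ} (hα : 0 < α) (hg : 0 < g) {x : ℝ} (hx : x ∈ Ioc 0 g) :
    HasDerivWithinAt (fun x : ℝ => (x / g) ^ α) (α * x ^ (α - 1) / g ^ α) (Ioc 0 g) x := by
  have h1 : HasDerivAt (fun x : ℝ => x / g) g⁻¹ x := by
    simpa [div_eq_mul_inv] using (hasDerivAt_id x).mul_const g⁻¹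
  have h2 := h1.rpow_const (p := α) (Or.inl (ne_of_gt (div_pos hx.1 hg) : (x / g : ℝ) ≠ 0))
  have h3 : g⁻¹ * α * (x / g) ^ (α - 1) = α * x ^ (α - 1) / g ^ α := by
    rw [div_rpow hx.1.le hg.le, rpow_sub hg, rpow_one]
    field_simp
  exact (h3 ▸ h2).hasDerivWithinAt

lemma my_inj {α g : ℝ} (hα : 0 < α) (hg : 0 < g) :
    InjOn (fun x : ℝ => (x / g) ^ α) (Ioc 0 g) := by
  have : StrictMonoOn (fun x : ℝ => (x / g) ^ α) (Ioc 0 g) := by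
    intro x hx y hy hxy
    exact rpow_lt_rpow (le_of_lt (div_pos hx.1 hg)) (div_lt_div_of_pos_right hxy hg) hα
  exact this.injOn


lemma my_section {α : ℝ} (hα : 0 < α) {g : ℝ} (hg : 0 < g) {s : Set ℝ} (hs : MeasurableSet s) :
    (volume.restrict (Icc (0:ℝ) 1)) ((fun u : ℝ => u ^ (α⁻¹ : ℝ) * g) ⁻¹' s) =
      ∫⁻ x in Ioc 0 g, ENNReal.ofReal (α * x ^ (α - 1) / g ^ α) * s.indicator 1 x := by
  have hmeas : Measurable fun u : ℝ => u ^ (α⁻¹ : ℝ) * g := by fun_prop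
  have hB : MeasurableSet ((fun u : ℝ => u ^ (α⁻¹ : ℝ) * g) ⁻¹' s) := hmeas hs
  rw [show volume.restrict (Icc (0:ℝ) 1) = volume.restrict (Ioc (0:ℝ) 1) from
    (Measure.restrict_congr_set Ioc_ae_eq_Icc).symm, ← lintegral_indicator_one hB,
    ← my_image_Ioc hα hg,
    my_lintegral_image measurableSet_Ioc (fun x hx => my_deriv hα hg hx) (my_inj hα hg)]
  refine setLIntegral_congr_fun measurableSet_Ioc (fun x hx => ?_)
  have hx0 : (0:ℝ) < x := hx.1
  have key : ((x / g) ^ α) ^ (α⁻¹ : ℝ) * g = x := by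
    rw [← rpow_mul (div_nonneg hx0.le hg.le), mul_inv_cancel₀ hα.ne', rpow_one,
      div_mul_cancel₀ _ hg.ne']
  have habs : |α * x ^ (α - 1) / g ^ α| = α * x ^ (α - 1) / g ^ α := abs_of_nonneg (by positivity)
  rw [habs]
  congr 1
  by_cases hxs : x ∈ s <;>
    simp [Set.indicator, Set.mem_preimage, key, hxs]


lemma my_gcalc {α lam : ℝ} (hα : 0 < α) (hlam : 0 < lam) {x : ℝ} (hx : 0 < x) :
    ∫⁻ g in Ioi (0:ℝ),
      (Ici x).indicator (fun g => ENNReal.ofReal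
        (lam ^ (α + 1) / Gamma α * x ^ (α - 1) * exp (-(lam * g)))) g =
      ProbabilityTheory.gammaPDF α lam x := by
  rw [lintegral_indicator measurableSet_Ici _, Measure.restrict_restrict measurableSet_Ici,
    show Ici x ∩ Ioi (0:ℝ) = Ici x by rw [inter_eq_left]; exact fun y hy => lt_of_lt_of_le hx hy,
    show (volume : Measure ℝ).restrict (Ici x) = volume.restrict (Ioi x) from
      Measure.restrict_congr_set Ioi_ae_eq_Ici.symm]
  have hC : (0:ℝ) ≤ lam ^ (α + 1) / Gamma α * x ^ (α - 1) := by
    have := Real.Gamma_pos_of_pos hα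
    positivity
  simp_rw [ENNReal.ofReal_mul hC]
  rw [lintegral_const_mul' _ _ ENNReal.ofReal_ne_top, my_exp_tail hlam x,
    ProbabilityTheory.gammaPDF_of_nonneg hx.le, ← ENNReal.ofReal_mul hC]
  congr 1
  rw [rpow_add_one hlam.ne' α]
  field_simp


lemma my_pdfmul {α lam : ℝ} (hα : 0 < α) (hlam : 0 < lam) {x g : ℝ} (hx : 0 < x) (hxg : x ≤ g) :
    gammaPDF (α + 1) lam g * ENNReal.ofReal (α * x ^ (α - 1) / g ^ α) =
      ENNReal.ofReal (lam ^ (α + 1) / Gamma α * x ^ (α - 1) * exp (-(lam * g))) := by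
  have hg : 0 < g := lt_of_lt_of_le hx hxg
  have hΓ : 0 < Gamma α := Gamma_pos_of_pos hα
  have h1 : (0:ℝ) ≤ lam ^ (α+1) / Gamma (α+1) * g ^ (α+1-1) * exp (-(lam * g)) := by positivity
  rw [gammaPDF_of_nonneg hg.le, ← ENNReal.ofReal_mul h1]
  congr 1
  rw [Gamma_add_one hα.ne', show α + 1 - 1 = α by ring]
  have hgα : (0:ℝ) < g ^ α := rpow_pos_of_pos hg α
  field_simp

lemma my_prod_map {α lam : ℝ} (hα : 0 < α) (hlam : 0 < lam) :
    ((volume.restrict (Icc (0:ℝ) 1)).prod (gammaMeasure (α + 1) lam)).map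
      (fun p : ℝ × ℝ => p.1 ^ (α⁻¹ : ℝ) * p.2) = gammaMeasure α lam := by
  have hprob : IsProbabilityMeasure (gammaMeasure (α + 1) lam) :=
    isProbabilityMeasure_gammaMeasure (by linarith) hlam
  have hmf : Measurable fun p : ℝ × ℝ => p.1 ^ (α⁻¹ : ℝ) * p.2 := by fun_prop
  refine Measure.ext fun s hs => ?_
  rw [Measure.map_apply hmf hs, Measure.prod_apply_symm (hmf hs)]
  set F : ℝ → ℝ≥0∞ :=
    fun g => (volume.restrict (Icc (0:ℝ) 1)) ((fun u : ℝ => u ^ (α⁻¹ : ℝ) * g) ⁻¹' s) with hFdef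
  have hF : Measurable F := measurable_measure_prodMk_right (hmf hs)
  show ∫⁻ g, F g ∂(gammaMeasure (α+1) lam) = _
  have hpdfmeas : Measurable (gammaPDF (α + 1) lam) :=
    (measurable_gammaPDFReal _ _).ennreal_ofReal
  rw [gammaMeasure, lintegral_withDensity_eq_lintegral_mul _ hpdfmeas hF]
  -- restrict to Ioi 0
  have hvanish : ∀ g : ℝ, g ∉ Ioi (0:ℝ) → (gammaPDF (α+1) lam * F) g = 0 := by
    intro g hg
    rcases lt_or_eq_of_le (not_lt.1 hg : g ≤ 0) with h | h
    · simp [gammaPDF_of_neg h]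
    · rw [Pi.mul_apply, h, gammaPDF_of_nonneg le_rfl, show (α + 1 - 1 : ℝ) = α by ring,
        zero_rpow hα.ne']
      simp
  have hrestr : ∫⁻ g, (gammaPDF (α+1) lam * F) g = ∫⁻ g in Ioi 0, (gammaPDF (α+1) lam * F) g := by
    rw [← lintegral_indicator measurableSet_Ioi]
    congr 1
    ext g
    by_cases hg : g ∈ Ioi (0:ℝ)
    · simp [indicator_of_mem hg]
    · simp [indicator_of_notMem hg, hvanish g hg]
  rw [hrestr]
  -- the jointly measurable integrand
  set Φ : ℝ × ℝ → ℝ≥0∞ := fun p =>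
    s.indicator 1 p.2 * (if p.2 ≤ p.1 then ENNReal.ofReal
      (lam ^ (α + 1) / Gamma α * p.2 ^ (α - 1) * exp (-(lam * p.1))) else 0) with hΦdef
  have hΦmeas : Measurable Φ := by
    apply Measurable.mul
    · exact (measurable_indicator_const_iff (1 : ℝ≥0∞)).2 hs |>.comp measurable_snd
    · exact Measurable.ite (measurableSet_le measurable_snd measurable_fst) (by fun_prop)
        measurable_const
  have hpoint : ∀ g ∈ Ioi (0:ℝ), (gammaPDF (α+1) lam * F) g = ∫⁻ x in Ioi 0, Φ (g, x) := by
    intro g hg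
    have hg0 : (0:ℝ) < g := hg
    rw [Pi.mul_apply, hFdef]
    simp only
    have hne : gammaPDF (α + 1) lam g ≠ ∞ := by rw [gammaPDF_eq]; exact ENNReal.ofReal_ne_top
    rw [my_section hα hg0 hs, ← lintegral_const_mul' _ _ hne,
      show (volume : Measure ℝ).restrict (Ioc 0 g) =
        (volume.restrict (Ioi 0)).restrict (Ioc 0 g) by
          rw [Measure.restrict_restrict measurableSet_Ioc,
            inter_eq_left.2 Ioc_subset_Ioi_self],
      ← lintegral_indicator measurableSet_Ioc]
    refine setLIntegral_congr_fun measurableSet_Ioi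
      (fun x hx => ?_)
    have hx0 : (0:ℝ) < x := hx
    by_cases hxg : x ≤ g
    · rw [Set.indicator_apply, if_pos (show x ∈ Ioc 0 g from ⟨hx0, hxg⟩)]
      simp only [hΦdef, if_pos hxg]
      by_cases hxs : x ∈ s
      · simp only [indicator_of_mem hxs, Pi.one_apply, one_mul, mul_one]
        exact my_pdfmul hα hlam hx0 hxg
      · simp [indicator_of_notMem hxs]
    · rw [Set.indicator_apply, if_neg (show x ∉ Ioc 0 g from fun h => hxg h.2)]
      simp only [hΦdef, if_neg hxg, mul_zero]
  rw [setLIntegral_congr_fun measurableSet_Ioi hpoint]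
  -- Tonelli swap
  have hswap : ∫⁻ g in Ioi (0:ℝ), ∫⁻ x in Ioi (0:ℝ), Φ (g, x) =
      ∫⁻ x in Ioi (0:ℝ), ∫⁻ g in Ioi (0:ℝ), Φ (g, x) := by
    exact lintegral_lintegral_swap (hΦmeas.aemeasurable)
  rw [hswap]
  -- inner integral over g
  have hinner : ∀ x ∈ Ioi (0:ℝ), ∫⁻ g in Ioi (0:ℝ), Φ (g, x) =
      s.indicator 1 x * gammaPDF α lam x := by
    intro x hx
    have hx0 : (0:ℝ) < x := hx
    have : ∀ g : ℝ, Φ (g, x) = s.indicator 1 x *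
        (Ici x).indicator (fun g => ENNReal.ofReal
          (lam ^ (α + 1) / Gamma α * x ^ (α - 1) * exp (-(lam * g)))) g := by
      intro g
      by_cases hxg : x ≤ g
      · simp only [hΦdef]
        rw [if_pos hxg, Set.indicator_of_mem (mem_Ici.mpr hxg)]
      · simp only [hΦdef]
        rw [if_neg hxg, Set.indicator_of_notMem (fun h => hxg (mem_Ici.mp h)), mul_zero]
    simp_rw [this]
    rw [lintegral_const_mul' _ _ (by by_cases hxs : x ∈ s <;> simp [hxs]), my_gcalc hα hlam hx0]
  rw [setLIntegral_congr_fun measurableSet_Ioi hinner]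
  -- final identification with gammaMeasure
  rw [gammaMeasure, withDensity_apply _ hs]
  have h1 : ∫⁻ x in Ioi (0:ℝ), s.indicator 1 x * gammaPDF α lam x =
      ∫⁻ x in Ioi (0:ℝ), s.indicator (gammaPDF α lam) x := by
    congr 1
    ext x
    by_cases hxs : x ∈ s <;> simp [hxs]
  rw [h1, lintegral_indicator hs, Measure.restrict_restrict hs]
  -- now: ∫⁻ x in s ∩ Ioi 0 = ∫⁻ x in s
  have hzero : ∫⁻ x in (Ioi (0:ℝ))ᶜ, gammaPDF α lam x ∂(volume.restrict s) = 0 := by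
    rw [compl_Ioi]
    refine le_antisymm ?_ (zero_le (a := _))
    calc ∫⁻ x in Iic (0:ℝ), gammaPDF α lam x ∂(volume.restrict s)
        ≤ ∫⁻ x in Iic (0:ℝ), gammaPDF α lam x ∂volume :=
          lintegral_mono' (Measure.restrict_mono_measure Measure.restrict_le_self _) le_rfl
      _ = ∫⁻ x in Iio (0:ℝ), gammaPDF α lam x ∂volume := by
          rw [Measure.restrict_congr_set Iio_ae_eq_Iic]
      _ = 0 := lintegral_gammaPDF_of_nonpos le_rfl
  have h2 : ∫⁻ a in s, gammaPDF α lam a =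
      ∫⁻ a in Ioi 0, gammaPDF α lam a ∂(volume.restrict s) +
        ∫⁻ a in (Ioi (0:ℝ))ᶜ, gammaPDF α lam a ∂(volume.restrict s) :=
    (lintegral_add_compl _ measurableSet_Ioi).symm
  rw [h2, hzero, add_zero, Measure.restrict_restrict measurableSet_Ioi,
    inter_comm (Ioi (0:ℝ)) s]
/-- If `U` is uniform on `[0,1]` and `G` is gamma`(α+1, λ)`, independent of `U`,
then `U^{1/α} * G` is gamma`(α, λ)`. -/
theorem uniform_rpow_mul_gamma {Ω : Type*} [MeasurableSpace Ω] (P : Measure Ω)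
    [IsProbabilityMeasure P] (α lam : ℝ) (hα : 0 < α) (hlam : 0 < lam)
    (U G : Ω → ℝ) (hU : Measurable U) (hG : Measurable G)
    (hUlaw : P.map U = volume.restrict (Set.Icc (0:ℝ) 1))
    (hGlaw : P.map G = gammaMeasure (α + 1) lam)
    (hindep : IndepFun U G P) :
    P.map (fun ω => U ω ^ (α⁻¹ : ℝ) * G ω) = gammaMeasure α lam := by
  have hmf : Measurable fun p : ℝ × ℝ => p.1 ^ (α⁻¹ : ℝ) * p.2 := by fun_prop
  have hpair : P.map (fun ω => (U ω, G ω)) = (P.map U).prod (P.map G) :=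
    (ProbabilityTheory.indepFun_iff_map_prod_eq_prod_map_map hU.aemeasurable
      hG.aemeasurable).1 hindep
  calc P.map (fun ω => U ω ^ (α⁻¹ : ℝ) * G ω)
      = (P.map (fun ω => (U ω, G ω))).map (fun p : ℝ × ℝ => p.1 ^ (α⁻¹ : ℝ) * p.2) :=
        (Measure.map_map hmf (hU.prodMk hG)).symm
    _ = gammaMeasure α lam := by
        rw [hpair, hUlaw, hGlaw, my_prod_map hα hlam]
end
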